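/- Let X be a topological space with a continuous quandle operation ▷ (x ▷ x = x; each right translation β_y invertible; right self-distributive). Assume every path component of X is indecomposable, i.e., whenever x and y lie in the same path component (Joined x y), x and y are related by the equivalence relation generated by a ~ b ⟺ ∃ c, (Joined a c ∧ b = a ▷ c). Then the quotient of the free abelian group on X by the subgroup generated by the elements (of a) − (of (a ▷ b)), over all pairs a, b with Joined a b, is isomorphic as an additive group to the free abelian group on the set of path components of X (the zeroth homotopy ZerothHomotopy X). (This quotient is exactly H₀(X), so H₀(X) = ⊕_α ℤ_α.) -/

import Mathlib

/-- Let `X` be a topological space with a continuous quandle operation `op` (idempotent,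
bijective right translations, right self-distributive). If every path component of `X` is
indecomposable (any two joined points are related by the equivalence relation generated by
`a ~ a ▷ c` for `c` joined to `a`), then the quotient of the free abelian group on `X` by
the subgroup generated by the elements `of a - of (a ▷ b)` over all pairs with
`Joined a b` — which is `H₀(X)` — is isomorphic to the free abelian group on the set of
path components of `X`, i.e. `H₀(X) = ⊕_α ℤ_α`. -/
theorem H0_eq_freeAbelianGroup_zerothHomotopy {X : Type*} [TopologicalSpace X]
    (op : X → X → X)
    (hcont : Continuous fun p : X × X => op p.1 p.2)
    (hidem : ∀ x : X, op x x = x)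
    (hbij : ∀ y : X, Function.Bijective fun x : X => op x y)
    (hdist : ∀ x y z : X, op (op x y) z = op (op x z) (op y z))
    (hind : ∀ x y : X, Joined x y →
      Relation.EqvGen (fun a b : X => ∃ c : X, Joined a c ∧ b = op a c) x y) :
    Nonempty ((FreeAbelianGroup X ⧸ AddSubgroup.closure
      {z : FreeAbelianGroup X | ∃ a b : X, Joined a b ∧
        z = FreeAbelianGroup.of a - FreeAbelianGroup.of (op a b)}) ≃+
      FreeAbelianGroup (ZerothHomotopy X)) := by
  classical
  set S : Set (FreeAbelianGroup X) := {z : FreeAbelianGroup X | ∃ a b : X, Joined a b ∧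
        z = FreeAbelianGroup.of a - FreeAbelianGroup.of (op a b)} with hSdef
  let N := AddSubgroup.closure S
  let φ : FreeAbelianGroup X →+ FreeAbelianGroup (ZerothHomotopy X) :=
    FreeAbelianGroup.map ZerothHomotopy.mk
  have hker : N ≤ φ.ker := by
    rw [AddSubgroup.closure_le]
    rintro z ⟨a, b, hab, rfl⟩
    obtain ⟨γ⟩ := hab
    have hjoin : Joined a (op a b) :=
      ⟨⟨⟨fun t => op a (γ t), hcont.comp (continuous_const.prodMk γ.continuous)⟩,
        by simp [hidem], by simp⟩⟩
    have : ZerothHomotopy.mk a = ZerothHomotopy.mk (op a b) :=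
      Quotient.sound hjoin
    simp [φ, AddMonoidHom.mem_ker, FreeAbelianGroup.map_of, this,
      FreeAbelianGroup.map_of_apply]
  have hmk' : ∀ x y : X,
      Relation.EqvGen (fun a b : X => ∃ c : X, Joined a c ∧ b = op a c) x y →
      (QuotientAddGroup.mk (FreeAbelianGroup.of x) : FreeAbelianGroup X ⧸ N) =
        QuotientAddGroup.mk (FreeAbelianGroup.of y) := by
    intro x y hxy
    induction hxy with
    | rel a b hab =>
      obtain ⟨c, hac, rfl⟩ := hab
      exact (QuotientAddGroup.eq_iff_sub_mem).mpr
        (AddSubgroup.subset_closure ⟨a, c, hac, rfl⟩)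
    | refl a => rfl
    | symm a b _ ih => exact ih.symm
    | trans a b c _ _ ih1 ih2 => exact ih1.trans ih2
  have hmk : ∀ x y : X, Joined x y →
      (QuotientAddGroup.mk (FreeAbelianGroup.of x) : FreeAbelianGroup X ⧸ N) =
        QuotientAddGroup.mk (FreeAbelianGroup.of y) := fun x y h => hmk' x y (hind x y h)
  let ψ0 : ZerothHomotopy X → FreeAbelianGroup X ⧸ N :=
    Quotient.lift (fun x => QuotientAddGroup.mk (FreeAbelianGroup.of x)) hmk
  let ψ : FreeAbelianGroup (ZerothHomotopy X) →+ FreeAbelianGroup X ⧸ N :=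
    FreeAbelianGroup.lift ψ0
  let φbar : FreeAbelianGroup X ⧸ N →+ FreeAbelianGroup (ZerothHomotopy X) :=
    QuotientAddGroup.lift N φ hker
  refine ⟨AddMonoidHom.toAddEquiv φbar ψ ?_ ?_⟩
  · apply QuotientAddGroup.addMonoidHom_ext
    ext x
    simp [φbar, ψ, φ, ψ0, FreeAbelianGroup.map_of, QuotientAddGroup.lift_mk,
      FreeAbelianGroup.map_of_apply, FreeAbelianGroup.lift_apply_of, ZerothHomotopy.mk]
    exact FreeAbelianGroup.lift_apply_of ψ0 (ZerothHomotopy.mk x)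
  · ext q
    induction q using Quotient.ind with
    | _ x => exact (congrArg φbar (FreeAbelianGroup.lift_apply_of ψ0 (ZerothHomotopy.mk x))).trans (FreeAbelianGroup.map_of_apply (f := ZerothHomotopy.mk) x :)
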